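/- Let h : {0,…,9} → [0,∞) be not identically zero, and set E = ∑_{k=0}^4 h(2k), O = ∑_{k=0}^4 h(2k+1), S = max{E, O}. Then for every n ≥ 2, ∑_{ω ∈ Ω_n} ∏_{j=1}^n h(ω_j) ≤ (h(2)+h(4)+h(6)+h(8)) · S^{n-1}. -/

import Mathlib

open scoped Classical

noncomputable def Dn (n : ℕ) (x : Fin n → Fin 10) : ℕ :=
  ∑ j : Fin n, 10 ^ (j : ℕ) * (x j : ℕ)

noncomputable def Omega (n : ℕ) : Finset (Fin n → Fin 10) :=
  Finset.univ.filter (fun x => ∃ k ≥ n, Dn n x % 10 ^ n = 2 ^ k % 10 ^ n)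

lemma pow2_mod10 (k : ℕ) (hk : 1 ≤ k) :
    2 ^ k % 10 = 2 ∨ 2 ^ k % 10 = 4 ∨ 2 ^ k % 10 = 8 ∨ 2 ^ k % 10 = 6 := by
  induction k with
  | zero => omega
  | succ m ih =>
    rcases Nat.eq_or_lt_of_le hk with h1 | h1
    · left; rw [← h1]; rfl
    · have hm : 1 ≤ m := by omega
      have key : 2 ^ (m + 1) % 10 = (2 ^ m % 10) * 2 % 10 := by
        rw [pow_succ, Nat.mul_mod]
      rcases ih hm with h | h | h | h <;> rw [key, h] <;> simp

lemma Dn_one (x : Fin 1 → Fin 10) : Dn 1 x = (x 0 : ℕ) := by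
  simp [Dn]

lemma Omega_one :
    Omega 1 = ({fun _ => 2, fun _ => 4, fun _ => 6, fun _ => 8} :
      Finset (Fin 1 → Fin 10)) := by
  ext x
  simp only [Omega, Finset.mem_filter, Finset.mem_univ, true_and, Finset.mem_insert,
    Finset.mem_singleton]
  constructor
  · rintro ⟨k, hk, heq⟩
    rw [Dn_one, pow_one] at heq
    have hx : (x 0 : ℕ) % 10 = (x 0 : ℕ) := Nat.mod_eq_of_lt (x 0).is_lt
    rw [hx] at heq
    have hval : (x 0 : ℕ) = 2 ∨ (x 0 : ℕ) = 4 ∨ (x 0 : ℕ) = 6 ∨ (x 0 : ℕ) = 8 := by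
      rcases pow2_mod10 k hk with h | h | h | h <;> omega
    have hfun : ∀ (c : Fin 10), (x 0 : ℕ) = (c : ℕ) → x = fun _ => c := by
      intro c hc
      funext j
      have hj : j = 0 := Subsingleton.elim _ _
      rw [hj]
      exact Fin.ext hc
    rcases hval with h | h | h | h
    · exact Or.inl (hfun 2 h)
    · exact Or.inr (Or.inl (hfun 4 h))
    · exact Or.inr (Or.inr (Or.inl (hfun 6 h)))
    · exact Or.inr (Or.inr (Or.inr (hfun 8 h)))
  · rintro (rfl | rfl | rfl | rfl)
    · exact ⟨1, le_refl 1, by rw [Dn_one]; rfl⟩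
    · exact ⟨2, by norm_num, by rw [Dn_one]; rfl⟩
    · exact ⟨4, by norm_num, by rw [Dn_one]; rfl⟩
    · exact ⟨3, by norm_num, by rw [Dn_one]; rfl⟩

lemma sum_Omega_one (h : ℕ → ℝ) :
    (∑ ω ∈ Omega 1, ∏ j : Fin 1, h (ω j)) = h 2 + h 4 + h 6 + h 8 := by
  rw [Omega_one]
  rw [Finset.sum_insert (by decide), Finset.sum_insert (by decide),
    Finset.sum_insert (by decide), Finset.sum_singleton]
  have e4 : ((4 : Fin 10) : ℕ) = 4 := rfl
  have e6 : ((6 : Fin 10) : ℕ) = 6 := rfl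
  have e8 : ((8 : Fin 10) : ℕ) = 8 := rfl
  simp [Fin.prod_univ_one, e4, e6, e8]
  ring

lemma Dn_succ (n : ℕ) (x : Fin (n + 1) → Fin 10) :
    Dn (n + 1) x = Dn n (fun j => x j.castSucc) + 10 ^ n * (x (Fin.last n) : ℕ) := by
  simp [Dn, Fin.sum_univ_castSucc]

lemma mem_Omega_parity (n : ℕ) (x : Fin (n + 1) → Fin 10) (hx : x ∈ Omega (n + 1)) :
    (fun j => x j.castSucc) ∈ Omega n ∧
    (x (Fin.last n) : ℕ) % 2 = (Dn n (fun j => x j.castSucc) / 2 ^ n) % 2 := by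
  rw [Omega, Finset.mem_filter] at hx
  obtain ⟨-, k, hk, heq⟩ := hx
  set y : Fin n → Fin 10 := fun j => x j.castSucc with hy
  set xl : ℕ := (x (Fin.last n) : ℕ) with hxl
  have hdvd10 : (10 : ℕ) ^ n ∣ 10 ^ (n + 1) := pow_dvd_pow _ (Nat.le_succ n)
  constructor
  · rw [Omega, Finset.mem_filter]
    refine ⟨Finset.mem_univ _, k, by omega, ?_⟩
    have h1 : Dn (n + 1) x % 10 ^ n = 2 ^ k % 10 ^ n := by
      rw [← Nat.mod_mod_of_dvd _ hdvd10, heq, Nat.mod_mod_of_dvd _ hdvd10]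
    rw [Dn_succ] at h1
    rwa [Nat.add_mul_mod_self_left] at h1
  · -- parity of the last digit
    have hdvd2 : (2 : ℕ) ^ (n + 1) ∣ 10 ^ (n + 1) :=
      pow_dvd_pow_of_dvd (by norm_num) _
    have h2 : Dn (n + 1) x % 2 ^ (n + 1) = 2 ^ k % 2 ^ (n + 1) := by
      rw [← Nat.mod_mod_of_dvd _ hdvd2, heq, Nat.mod_mod_of_dvd _ hdvd2]
    have h3 : 2 ^ k % 2 ^ (n + 1) = 0 :=
      Nat.eq_zero_of_dvd_of_lt
        ((Nat.dvd_mod_iff (dvd_refl _)).mpr (pow_dvd_pow 2 hk))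
        (Nat.mod_lt _ (Nat.pow_pos (by norm_num)))
    have hdvdD : 2 ^ (n + 1) ∣ Dn (n + 1) x := by
      rw [h3] at h2
      exact Nat.dvd_of_mod_eq_zero h2
    rw [Dn_succ] at hdvdD
    have h10 : (10 : ℕ) ^ n = 2 ^ n * 5 ^ n := by rw [← mul_pow]; norm_num
    have hxl10 : (2 : ℕ) ^ n ∣ 10 ^ n * xl := ⟨5 ^ n * xl, by rw [h10]; ring⟩
    have hsum : (2 : ℕ) ^ n ∣ Dn n y + 10 ^ n * xl :=
      dvd_trans (pow_dvd_pow 2 (Nat.le_succ n)) hdvdD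
    have hdvdy : (2 : ℕ) ^ n ∣ Dn n y := by
      have := Nat.dvd_sub hsum hxl10
      simpa using this
    obtain ⟨q, hq⟩ := hdvdy
    have hpow : (0 : ℕ) < 2 ^ n := Nat.pow_pos (by norm_num)
    have hdvd2' : 2 ∣ q + 5 ^ n * xl := by
      have heq2 : 2 ^ n * (q + 5 ^ n * xl) = Dn n y + 10 ^ n * xl := by
        rw [hq, h10]; ring
      have hd : 2 ^ n * 2 ∣ 2 ^ n * (q + 5 ^ n * xl) := by
        rw [heq2, ← pow_succ]; exact hdvdD
      exact (mul_dvd_mul_iff_left hpow.ne').mp hd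
    have h5 : (5 : ℕ) ^ n % 2 = 1 := by
      rw [Nat.pow_mod]; norm_num
    have hmul : (5 ^ n * xl) % 2 = xl % 2 := by
      rw [Nat.mul_mod, h5, one_mul, Nat.mod_mod_of_dvd _ (dvd_refl 2)]
    rw [hq, Nat.mul_div_cancel_left _ hpow]
    omega

lemma step_bound (h : ℕ → ℝ) (hpos : ∀ j < 10, 0 ≤ h j) (n : ℕ) :
    (∑ ω ∈ Omega (n + 1), ∏ j : Fin (n + 1), h (ω j))
      ≤ (∑ ω ∈ Omega n, ∏ j : Fin n, h (ω j)) *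
          (max (∑ k ∈ Finset.range 5, h (2 * k)) (∑ k ∈ Finset.range 5, h (2 * k + 1))) := by
  classical
  set S : ℝ := max (∑ k ∈ Finset.range 5, h (2 * k)) (∑ k ∈ Finset.range 5, h (2 * k + 1))
    with hS
  set p : (Fin n → Fin 10) → ℕ := fun y => (Dn n y / 2 ^ n) % 2 with hp
  have hplt : ∀ y, p y < 2 := fun y => Nat.mod_lt _ (by norm_num)
  set φ : (Fin (n + 1) → Fin 10) → ((Fin n → Fin 10) × Fin 5) :=
    fun x => (fun j => x j.castSucc,
      ⟨(x (Fin.last n) : ℕ) / 2, by have := (x (Fin.last n)).is_lt; omega⟩) with hφ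
  set g : ((Fin n → Fin 10) × Fin 5) → ℝ :=
    fun yd => (∏ j : Fin n, h (yd.1 j)) * h (2 * (yd.2 : ℕ) + p yd.1) with hg
  have hprod_nonneg : ∀ y : Fin n → Fin 10, 0 ≤ ∏ j : Fin n, h (y j) := by
    intro y
    exact Finset.prod_nonneg fun j _ => hpos _ (y j).is_lt
  have hg_nonneg : ∀ yd, 0 ≤ g yd := by
    intro yd
    apply mul_nonneg (hprod_nonneg _)
    apply hpos
    have := yd.2.is_lt
    have := hplt yd.1
    omega
  -- each ω ∈ Ω_{n+1} contributes g (φ ω)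
  have hval : ∀ x ∈ Omega (n + 1), (∏ j : Fin (n + 1), h (x j)) = g (φ x) := by
    intro x hx
    obtain ⟨hmem, hpar⟩ := mem_Omega_parity n x hx
    have hsplit : (∏ j : Fin (n + 1), h (x j))
        = (∏ j : Fin n, h (x j.castSucc)) * h (x (Fin.last n)) := by
      rw [Fin.prod_univ_castSucc]
    rw [hsplit, hg]
    congr 1
    congr 1
    have hd : 2 * ((x (Fin.last n) : ℕ) / 2) + p (fun j => x j.castSucc)
        = (x (Fin.last n) : ℕ) := by
      simp only [hp]
      omega
    rw [hφ]
    simpa using hd.symm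
  -- injectivity of φ on Ω_{n+1}
  have hinj : Set.InjOn φ (Omega (n + 1) : Set (Fin (n + 1) → Fin 10)) := by
    intro x hx x' hx' hxy
    have h1 := congrArg Prod.fst hxy
    have h2 := congrArg (fun z => (z.2 : ℕ)) hxy
    simp only [hφ] at h1 h2
    have hpar := (mem_Omega_parity n x hx).2
    have hpar' := (mem_Omega_parity n x' hx').2
    rw [h1] at hpar
    funext j
    induction j using Fin.lastCases with
    | last => exact Fin.ext (by omega)
    | cast i => exact congrFun h1 i
  -- main chain
  have himg : ∀ x ∈ Omega (n + 1), φ x ∈ (Omega n) ×ˢ (Finset.univ : Finset (Fin 5)) := by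
    intro x hx
    rw [Finset.mem_product]
    exact ⟨(mem_Omega_parity n x hx).1, Finset.mem_univ _⟩
  calc (∑ ω ∈ Omega (n + 1), ∏ j : Fin (n + 1), h (ω j))
      = ∑ ω ∈ Omega (n + 1), g (φ ω) := Finset.sum_congr rfl hval
    _ = ∑ z ∈ (Omega (n + 1)).image φ, g z := (Finset.sum_image
          (fun a ha b hb hab => hinj ha hb hab)).symm
    _ ≤ ∑ z ∈ (Omega n) ×ˢ (Finset.univ : Finset (Fin 5)), g z := by
          apply Finset.sum_le_sum_of_subset_of_nonneg
          · intro z hz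
            obtain ⟨x, hx, rfl⟩ := Finset.mem_image.mp hz
            exact himg x hx
          · intro z _ _
            exact hg_nonneg z
    _ = ∑ y ∈ Omega n, ∑ d : Fin 5, g (y, d) := by rw [Finset.sum_product]
    _ ≤ ∑ y ∈ Omega n, (∏ j : Fin n, h (y j)) * S := by
          apply Finset.sum_le_sum
          intro y _
          have hinner : ∑ d : Fin 5, g (y, d)
              = (∏ j : Fin n, h (y j)) * ∑ d : Fin 5, h (2 * (d : ℕ) + p y) := by
            rw [Finset.mul_sum]
          rw [hinner]
          apply mul_le_mul_of_nonneg_left _ (hprod_nonneg y)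
          have hrange : ∑ d : Fin 5, h (2 * (d : ℕ) + p y)
              = ∑ k ∈ Finset.range 5, h (2 * k + p y) :=
            Fin.sum_univ_eq_sum_range (fun k => h (2 * k + p y)) 5
          rw [hrange]
          rcases Nat.mod_two_eq_zero_or_one (Dn n y / 2 ^ n) with h0 | h1
          · have : p y = 0 := h0
            rw [this]
            simp only [Nat.add_zero]
            exact le_max_left _ _
          · have : p y = 1 := h1
            rw [this]
            exact le_max_right _ _
    _ = (∑ ω ∈ Omega n, ∏ j : Fin n, h (ω j)) * S := by rw [Finset.sum_mul]

lemma main_bound (h : ℕ → ℝ) (hpos : ∀ j < 10, 0 ≤ h j) (m : ℕ) :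
    (∑ ω ∈ Omega (m + 1), ∏ j : Fin (m + 1), h (ω j))
      ≤ (h 2 + h 4 + h 6 + h 8) *
          (max (∑ k ∈ Finset.range 5, h (2 * k)) (∑ k ∈ Finset.range 5, h (2 * k + 1))) ^ m := by
  set S : ℝ := max (∑ k ∈ Finset.range 5, h (2 * k)) (∑ k ∈ Finset.range 5, h (2 * k + 1))
    with hS
  have hSnonneg : 0 ≤ S := by
    refine le_trans ?_ (le_max_left _ _)
    exact Finset.sum_nonneg fun k hk => hpos _ (by simp at hk; omega)
  induction m with
  | zero =>
    rw [sum_Omega_one, pow_zero, mul_one]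
  | succ m ih =>
    calc (∑ ω ∈ Omega (m + 2), ∏ j : Fin (m + 2), h (ω j))
        ≤ (∑ ω ∈ Omega (m + 1), ∏ j : Fin (m + 1), h (ω j)) * S := step_bound h hpos (m + 1)
      _ ≤ ((h 2 + h 4 + h 6 + h 8) * S ^ m) * S :=
          mul_le_mul_of_nonneg_right ih hSnonneg
      _ = (h 2 + h 4 + h 6 + h 8) * S ^ (m + 1) := by ring

theorem weighted_sum_upper_bound (h : ℕ → ℝ) (hpos : ∀ j < 10, 0 ≤ h j)
    (hne : ∃ j < 10, h j ≠ 0) (n : ℕ) (hn : 2 ≤ n) :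
    (∑ ω ∈ Omega n, ∏ j : Fin n, h (ω j))
      ≤ (h 2 + h 4 + h 6 + h 8) *
          (max (∑ k ∈ Finset.range 5, h (2 * k)) (∑ k ∈ Finset.range 5, h (2 * k + 1)))
            ^ (n - 1) := by
  obtain ⟨m, rfl⟩ : ∃ m, n = m + 1 := ⟨n - 1, by omega⟩
  simpa using main_bound h hpos m
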